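/- Fix ε > 0, a sequence τ_n → 0⁺, discretized solutions x^{ε,τ_n} with common initial datum x₀, and suppose x^{ε,τ_n}(t) → x^ε(t) as n → ∞ for every t ∈ [0,T]. If x^ε is right-continuous at t ∈ [0,T) (i.e. x^ε(t') → x^ε(t) as t' → t⁺), then the epsilon local stability holds at t: E(t, x^ε(t)) ≤ E(t,z) + Ψ(z − x^ε(t)) for all z ∈ ℝ^d with ‖z − x^ε(t)‖ ≤ ε. -/

import Mathlib

open Filter MeasureTheory Set
open scoped Topology NNReal

section Setup

variable {X : Type*} [NormedAddCommGroup X] [NormedSpace ℝ X]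

/-- The set of partition sums defining the `Ψ`-dissipation of `u` on `[a,b]`:
sums `∑ Ψ(u(s_i) − u(s_{i−1}))` over finite strictly increasing partitions
`a = s₀ < s₁ < ⋯ < s_n = b`. -/
def dissSums (Ψ : X → ℝ) (u : ℝ → X) (a b : ℝ) : Set ℝ :=
  { S | ∃ (n : ℕ) (σ : Fin (n + 1) → ℝ), StrictMono σ ∧ σ 0 = a ∧ σ (Fin.last n) = b ∧
      S = ∑ i : Fin n, Ψ (u (σ i.succ) - u (σ i.castSucc)) }

/-- The `Ψ`-dissipation `Diss_Ψ(u;[a,b])`. -/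
noncomputable def dissTV (Ψ : X → ℝ) (u : ℝ → X) (a b : ℝ) : ℝ :=
  sSup (dissSums Ψ u a b)

/-- The subdifferential `∂Ψ(0) = {η : ⟨η,v⟩ ≤ Ψ(v) for all v}`. -/
def subdiffZero (Ψ : X → ℝ) : Set (X →L[ℝ] ℝ) :=
  { η | ∀ v, η v ≤ Ψ v }

/-- `inf_{η ∈ ∂Ψ(0)} ‖ξ + η‖_*`, where `‖·‖_*` is the dual (operator) norm. -/
noncomputable def distToSubdiff (Ψ : X → ℝ) (ξ : X →L[ℝ] ℝ) : ℝ :=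
  sInf ((fun η => ‖ξ + η‖) '' subdiffZero Ψ)

/-- The cost `Δ_new(t;a,b)`: infimum over Lipschitz paths `γ : [0,1] → X` with
`γ(0)=a`, `γ(1)=b` of `∫₀¹ Ψ(γ'(s)) + (inf_{z∈∂Ψ(0)} ‖D_xE(t,γ(s))+z‖_*)·‖γ'(s)‖ ds`. -/
noncomputable def deltaNew (DE : ℝ → X → X →L[ℝ] ℝ) (Ψ : X → ℝ) (t : ℝ) (a b : X) : ℝ :=
  sInf { c | ∃ (K : ℝ≥0) (γ : ℝ → X), LipschitzOnWith K γ (Icc 0 1) ∧ γ 0 = a ∧ γ 1 = b ∧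
      c = ∫ s in (0:ℝ)..1, (Ψ (deriv γ s) + distToSubdiff Ψ (DE t (γ s)) * ‖deriv γ s‖) }

/-- The new dissipation `Diss_new(u;[t₁,t₂])`, with prescribed one-sided limit
functions `uL`, `uR`, summing over the jump set the corrections `Δ_new − Ψ`. -/
noncomputable def dissNew (DE : ℝ → X → X →L[ℝ] ℝ) (Ψ : X → ℝ)
    (u uL uR : ℝ → X) (t₁ t₂ : ℝ) : ℝ :=
  dissTV Ψ u t₁ t₂
    + ∑' t : ({ s | ¬ ContinuousAt u s } ∩ Ioo t₁ t₂ : Set ℝ),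
        (deltaNew DE Ψ (t : ℝ) (uL (t : ℝ)) (u (t : ℝ)) +
          deltaNew DE Ψ (t : ℝ) (u (t : ℝ)) (uR (t : ℝ))
          - Ψ (u (t : ℝ) - uL (t : ℝ)) - Ψ (uR (t : ℝ) - u (t : ℝ)))
    + (deltaNew DE Ψ t₁ (u t₁) (uR t₁) - Ψ (uR t₁ - u t₁))
    + (deltaNew DE Ψ t₂ (uL t₂) (u t₂) - Ψ (u t₂ - uL t₂))

/-- `pts` is a discretized solution with initial datum `x₀`, neighborhood size `ε`,
time-step `τ` and `N` steps: `pts 0 = x₀` and each `pts i` minimizes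
`x ↦ E(iτ, x) + Ψ(x − pts (i−1))` over the closed ball of radius `ε` around `pts (i−1)`. -/
def IsDiscreteSol (E : ℝ → X → ℝ) (Ψ : X → ℝ) (x₀ : X) (ε τ : ℝ) (N : ℕ)
    (pts : ℕ → X) : Prop :=
  pts 0 = x₀ ∧ ∀ i : ℕ, 1 ≤ i → i ≤ N →
    ‖pts i - pts (i - 1)‖ ≤ ε ∧
    ∀ x : X, ‖x - pts (i - 1)‖ ≤ ε →
      E ((i : ℝ) * τ) (pts i) + Ψ (pts i - pts (i - 1)) ≤
        E ((i : ℝ) * τ) x + Ψ (x - pts (i - 1))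

/-- The piecewise-constant interpolant `x^{ε,τ}`: equal to `pts (i−1)` on
`[(i−1)τ, iτ)` for `i = 1,…,N`, and to `pts N` on `[Nτ, T]`. -/
noncomputable def discInterp (pts : ℕ → X) (τ : ℝ) (N : ℕ) (t : ℝ) : X :=
  pts (min N ⌊t / τ⌋₊)

end Setup

section MyAux
variable {X : Type*} [NormedAddCommGroup X] [NormedSpace ℝ X]

lemma gronwall_aux (T : ℝ) (E Et : ℝ → X → ℝ)
    (hEt : ∀ x : X, ∀ t ∈ Set.Icc (0:ℝ) T,
      HasDerivWithinAt (fun s => E s x) (Et t x) (Set.Icc 0 T) t)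
    (lam : ℝ)
    (hEbound : ∀ s ∈ Set.Icc (0:ℝ) T, ∀ x : X, |Et s x| ≤ lam * E s x)
    (x : X) {s s' : ℝ} (hs : s ∈ Set.Icc (0:ℝ) T) (hs' : s' ∈ Set.Icc (0:ℝ) T)
    (hss' : s ≤ s') :
    E s' x ≤ Real.exp (lam * (s' - s)) * E s x ∧
      E s x ≤ Real.exp (lam * (s' - s)) * E s' x := by
  have hfc : ContinuousOn (fun u => E u x) (Set.Icc 0 T) := fun u hu =>
    (hEt x u hu).continuousWithinAt
  have hderiv : ∀ c : ℝ, ∀ u ∈ Set.Ioo (0:ℝ) T,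
      HasDerivAt (fun v => Real.exp (c * v) * E v x)
        (Real.exp (c * u) * (c * 1) * E u x + Real.exp (c * u) * Et u x) u := by
    intro c u hu
    have hu' : u ∈ Set.Icc (0:ℝ) T := Set.Ioo_subset_Icc_self hu
    have hd : HasDerivAt (fun v => E v x) (Et u x) u :=
      (hEt x u hu').hasDerivAt (Icc_mem_nhds hu.1 hu.2)
    exact (((hasDerivAt_id u).const_mul c).exp).mul hd
  have hcont : ∀ c : ℝ, ContinuousOn (fun v => Real.exp (c * v) * E v x) (Set.Icc 0 T) :=
    fun c => ((Real.continuous_exp.comp (continuous_const.mul continuous_id)).continuousOn).mul hfc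
  have hdiff : ∀ c : ℝ, DifferentiableOn ℝ (fun v => Real.exp (c * v) * E v x)
      (interior (Set.Icc (0:ℝ) T)) := by
    intro c
    rw [interior_Icc]
    exact fun u hu => ((hderiv c u hu).differentiableAt).differentiableWithinAt
  have hmul : ∀ a b r : ℝ, Real.exp a * (Real.exp b * r) = Real.exp (a + b) * r := by
    intro a b r; rw [← mul_assoc, ← Real.exp_add]
  constructor
  · -- use antitone of exp(-lam v) E v
    have hanti : AntitoneOn (fun v => Real.exp (-lam * v) * E v x) (Set.Icc 0 T) := by
      apply antitoneOn_of_deriv_nonpos (convex_Icc 0 T) (hcont _) (hdiff _)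
      intro u hu
      rw [interior_Icc] at hu
      rw [(hderiv (-lam) u hu).deriv]
      have h1 := hEbound u (Set.Ioo_subset_Icc_self hu) x
      have h2 : Et u x ≤ lam * E u x := (abs_le.mp h1).2
      have h3 : (0:ℝ) < Real.exp (-lam * u) := Real.exp_pos _
      nlinarith
    have h := hanti hs hs' hss'
    simp only at h
    calc E s' x = Real.exp (lam * s') * (Real.exp (-lam * s') * E s' x) := by
          rw [hmul, show lam * s' + -lam * s' = 0 by ring, Real.exp_zero, one_mul]
      _ ≤ Real.exp (lam * s') * (Real.exp (-lam * s) * E s x) :=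
          mul_le_mul_of_nonneg_left h (Real.exp_pos _).le
      _ = Real.exp (lam * (s' - s)) * E s x := by
          rw [hmul, show lam * s' + -lam * s = lam * (s' - s) by ring]
  · have hmono : MonotoneOn (fun v => Real.exp (lam * v) * E v x) (Set.Icc 0 T) := by
      apply monotoneOn_of_deriv_nonneg (convex_Icc 0 T) (hcont _) (hdiff _)
      intro u hu
      rw [interior_Icc] at hu
      rw [(hderiv lam u hu).deriv]
      have h1 := hEbound u (Set.Ioo_subset_Icc_self hu) x
      have h2 : -(lam * E u x) ≤ Et u x := neg_le_of_abs_le h1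
      have h3 : (0:ℝ) < Real.exp (lam * u) := Real.exp_pos _
      nlinarith
    have h := hmono hs hs' hss'
    simp only at h
    calc E s x = Real.exp (-lam * s) * (Real.exp (lam * s) * E s x) := by
          rw [hmul, show -lam * s + lam * s = 0 by ring, Real.exp_zero, one_mul]
      _ ≤ Real.exp (-lam * s) * (Real.exp (lam * s') * E s' x) :=
          mul_le_mul_of_nonneg_left h (Real.exp_pos _).le
      _ = Real.exp (lam * (s' - s)) * E s' x := by
          rw [hmul, show -lam * s + lam * s' = lam * (s' - s) by ring]

lemma chain_aux (T : ℝ) (E Et : ℝ → X → ℝ)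
    (hEt : ∀ x : X, ∀ t ∈ Set.Icc (0:ℝ) T,
      HasDerivWithinAt (fun s => E s x) (Et t x) (Set.Icc 0 T) t)
    (lam : ℝ)
    (hEbound : ∀ s ∈ Set.Icc (0:ℝ) T, ∀ x : X, |Et s x| ≤ lam * E s x)
    (Ψ : X → ℝ) (hΨnn : ∀ v, 0 ≤ Ψ v) (hΨ0 : Ψ 0 = 0)
    (ε τ' : ℝ) (hε : 0 < ε) (hτ' : 0 < τ') (Nn : ℕ) (p : ℕ → X)
    (hNτ : (Nn : ℝ) * τ' ≤ T)
    (hmin : ∀ i : ℕ, 1 ≤ i → i ≤ Nn → ∀ x : X, ‖x - p (i - 1)‖ ≤ ε →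
      E ((i : ℝ) * τ') (p i) + Ψ (p i - p (i - 1)) ≤ E ((i : ℝ) * τ') x + Ψ (x - p (i - 1))) :
    ∀ (i k : ℕ), 1 ≤ i → i + k ≤ Nn →
      E (((i + k : ℕ) : ℝ) * τ') (p (i + k)) ≤
        Real.exp (lam * ((k : ℝ) * τ')) * E ((i : ℝ) * τ') (p i) := by
  intro i k hi
  induction k with
  | zero =>
      intro _
      simp
  | succ k ih =>
      intro hik
      have hik' : i + k ≤ Nn := by omega
      have IH := ih hik'
      have hm : 1 ≤ i + k + 1 := by omega
      have hmem : ∀ m : ℕ, m ≤ Nn → ((m : ℝ) * τ') ∈ Set.Icc (0:ℝ) T := by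
        intro m hm
        constructor
        · positivity
        · calc (m : ℝ) * τ' ≤ (Nn : ℝ) * τ' := by
                have : (m : ℝ) ≤ (Nn : ℝ) := Nat.cast_le.mpr hm
                nlinarith
            _ ≤ T := hNτ
      -- minimality step: E((i+k+1)τ', p(i+k+1)) ≤ E((i+k+1)τ', p(i+k))
      have step1 : E (((i + k + 1 : ℕ) : ℝ) * τ') (p (i + k + 1)) ≤
          E (((i + k + 1 : ℕ) : ℝ) * τ') (p (i + k)) := by
        have h := hmin (i + k + 1) hm (by omega) (p (i + k))
          (by simp [show i + k + 1 - 1 = i + k from rfl]; exact hε.le)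
        simp only [show i + k + 1 - 1 = i + k from rfl, sub_self, hΨ0, add_zero] at h
        have := hΨnn (p (i + k + 1) - p (i + k))
        linarith
      -- gronwall step
      have step2 : E (((i + k + 1 : ℕ) : ℝ) * τ') (p (i + k)) ≤
          Real.exp (lam * τ') * E (((i + k : ℕ) : ℝ) * τ') (p (i + k)) := by
        have h := (gronwall_aux T E Et hEt lam hEbound (p (i + k))
          (hmem (i + k) (by omega)) (hmem (i + k + 1) (by omega))
          (by push_cast; nlinarith)).1
        have harg : (((i + k + 1 : ℕ) : ℝ) * τ' - ((i + k : ℕ) : ℝ) * τ') = τ' := by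
          push_cast; ring
        rwa [harg] at h
      calc E (((i + k + 1 : ℕ) : ℝ) * τ') (p (i + k + 1))
          ≤ Real.exp (lam * τ') * E (((i + k : ℕ) : ℝ) * τ') (p (i + k)) :=
            le_trans step1 step2
        _ ≤ Real.exp (lam * τ') * (Real.exp (lam * ((k : ℝ) * τ')) * E ((i : ℝ) * τ') (p i)) :=
            mul_le_mul_of_nonneg_left IH (Real.exp_pos _).le
        _ = Real.exp (lam * (((k + 1 : ℕ) : ℝ) * τ')) * E ((i : ℝ) * τ') (p i) := by
            rw [← mul_assoc, ← Real.exp_add]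
            congr 2
            push_cast; ring


end MyAux

set_option maxHeartbeats 1000000 in
theorem stmt_7
    {X : Type*} [NormedAddCommGroup X] [NormedSpace ℝ X] [FiniteDimensional ℝ X]
    [Nontrivial X]
    (T : ℝ) (hT : 0 < T)
    (E Et : ℝ → X → ℝ) (DE : ℝ → X → X →L[ℝ] ℝ)
    (hEnn : ∀ t ∈ Set.Icc (0:ℝ) T, ∀ x : X, 0 ≤ E t x)
    (hEt : ∀ x : X, ∀ t ∈ Set.Icc (0:ℝ) T,
      HasDerivWithinAt (fun s => E s x) (Et t x) (Set.Icc 0 T) t)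
    (hDE : ∀ t ∈ Set.Icc (0:ℝ) T, ∀ x : X, HasFDerivAt (fun y => E t y) (DE t x) x)
    (hEtc : ContinuousOn (fun p : ℝ × X => Et p.1 p.2) (Set.Icc 0 T ×ˢ Set.univ))
    (hDEc : ContinuousOn (fun p : ℝ × X => DE p.1 p.2) (Set.Icc 0 T ×ˢ Set.univ))
    (lam : ℝ) (hlam : 0 ≤ lam)
    (hEbound : ∀ s ∈ Set.Icc (0:ℝ) T, ∀ x : X, |Et s x| ≤ lam * E s x)
    (Ψ : X → ℝ) (hΨnn : ∀ v, 0 ≤ Ψ v) (hΨconv : ConvexOn ℝ Set.univ Ψ)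
    (hΨhom : ∀ c : ℝ, 0 ≤ c → ∀ v : X, Ψ (c • v) = c * Ψ v)
    (hΨpos : ∀ v : X, v ≠ 0 → 0 < Ψ v)
    (x₀ : X) (ε : ℝ) (hε : 0 < ε)
    (τ : ℕ → ℝ) (hτpos : ∀ n, 0 < τ n) (hτ0 : Filter.Tendsto τ Filter.atTop (nhds 0))
    (N : ℕ → ℕ) (hNT : ∀ n, (N n : ℝ) * τ n ≤ T ∧ T < ((N n : ℝ) + 1) * τ n)
    (pts : ℕ → ℕ → X) (hsol : ∀ n, IsDiscreteSol E Ψ x₀ ε (τ n) (N n) (pts n))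
    (xe : ℝ → X)
    (hconv : ∀ t ∈ Set.Icc (0:ℝ) T,
      Filter.Tendsto (fun n => discInterp (pts n) (τ n) (N n) t) Filter.atTop (nhds (xe t)))
    (t : ℝ) (ht : t ∈ Set.Ico (0:ℝ) T)
    (hrc : Filter.Tendsto xe (nhdsWithin t (Set.Ioi t)) (nhds (xe t))) :
    ∀ z : X, ‖z - xe t‖ ≤ ε → E t (xe t) ≤ E t z + Ψ (z - xe t) := by
  intro z hz
  have htIcc : t ∈ Set.Icc (0:ℝ) T := ⟨ht.1, ht.2.le⟩
  have hΨ0 : Ψ 0 = 0 := by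
    have := hΨhom 0 le_rfl 0
    simpa using this
  have hΨw : 0 ≤ Ψ (z - xe t) := hΨnn _
  -- the point at time t
  have hfloorN : ∀ n, ⌊t / τ n⌋₊ ≤ N n := by
    intro n
    have h1 : t / τ n < (N n : ℝ) + 1 := by
      rw [div_lt_iff₀ (hτpos n)]
      calc t < T := ht.2
        _ < ((N n : ℝ) + 1) * τ n := (hNT n).2
    have h2 : ⌊t / τ n⌋₊ < N n + 1 := by
      rw [Nat.floor_lt (div_nonneg ht.1 (hτpos n).le)]
      exact_mod_cast h1
    omega
  have hy : Filter.Tendsto (fun n => pts n ⌊t / τ n⌋₊) Filter.atTop (nhds (xe t)) := by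
    refine (hconv t htIcc).congr (fun n => ?_)
    simp [discInterp, min_eq_right (hfloorN n)]
  have hzn : Filter.Tendsto (fun n => z - xe t + pts n ⌊t / τ n⌋₊) Filter.atTop (nhds z) := by
    have := hy.const_add (z - xe t)
    simpa using this
  -- main intermediate claim
  have key : ∀ t' ∈ Set.Ioo t T,
      E t' (xe t') ≤ Real.exp (lam * (t' - t)) * (E t z + Ψ (z - xe t)) := by
    intro t' ht'
    have ht'Icc : t' ∈ Set.Icc (0:ℝ) T := ⟨ht.1.trans ht'.1.le, ht'.2.le⟩
    have hev : ∀ᶠ n in Filter.atTop, τ n < t' - t := by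
      have : (0:ℝ) < t' - t := by linarith [ht'.1]
      exact hτ0.eventually_lt_const this
    have hmain : ∀ᶠ n in Filter.atTop,
        E t' (discInterp (pts n) (τ n) (N n) t') ≤
          Real.exp (lam * (t' - t)) *
            (Real.exp (lam * τ n) * E t (z - xe t + pts n ⌊t / τ n⌋₊) + Ψ (z - xe t)) := by
      filter_upwards [hev] with n hn
      set τ' := τ n with hτ'def
      have hτ' : 0 < τ' := hτpos n
      set Nn := N n with hNndef
      set p := pts n with hpdef
      have hNτ : (Nn : ℝ) * τ' ≤ T := (hNT n).1
      have hNτ2 : T < ((Nn : ℝ) + 1) * τ' := (hNT n).2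
      set i := ⌊t / τ'⌋₊ + 1 with hidef
      set j := ⌊t' / τ'⌋₊ with hjdef
      have hfl : (⌊t / τ'⌋₊ : ℝ) ≤ t / τ' := Nat.floor_le (div_nonneg ht.1 hτ'.le)
      have hfl2 : t / τ' < (⌊t / τ'⌋₊ : ℝ) + 1 := Nat.lt_floor_add_one _
      have ht'0 : 0 ≤ t' := ht.1.trans ht'.1.le
      have hjl : (j : ℝ) ≤ t' / τ' := Nat.floor_le (div_nonneg ht'0 hτ'.le)
      have hjl2 : t' / τ' < (j : ℝ) + 1 := Nat.lt_floor_add_one _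
      have hiτ : t < (i : ℝ) * τ' := by
        have h1 : t / τ' < (i : ℝ) := by push_cast [hidef]; linarith
        have h := mul_lt_mul_of_pos_right h1 hτ'
        rwa [div_mul_cancel₀ t hτ'.ne'] at h
      have hiτ2 : (i : ℝ) * τ' ≤ t + τ' := by
        have h1 : (i : ℝ) ≤ t / τ' + 1 := by push_cast [hidef]; linarith
        have h := mul_le_mul_of_nonneg_right h1 hτ'.le
        rwa [add_mul, div_mul_cancel₀ t hτ'.ne', one_mul] at h
      have hjτ : (j : ℝ) * τ' ≤ t' := by
        have h := mul_le_mul_of_nonneg_right hjl hτ'.le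
        rwa [div_mul_cancel₀ t' hτ'.ne'] at h
      have hjτ2 : t' < ((j : ℝ) + 1) * τ' := by
        have h := mul_lt_mul_of_pos_right hjl2 hτ'
        rwa [div_mul_cancel₀ t' hτ'.ne'] at h
      have hij : i ≤ j := by
        have h1 : (i : ℝ) * τ' < ((j : ℝ) + 1) * τ' := by linarith
        have h2 : (i : ℝ) < (j : ℝ) + 1 := lt_of_mul_lt_mul_right h1 hτ'.le
        have : (i : ℕ) < j + 1 := by exact_mod_cast h2
        omega
      have hjN : j ≤ Nn := by
        have h1 : (j : ℝ) * τ' < ((Nn : ℝ) + 1) * τ' := by linarith [ht'.2, hjτ, hNτ2]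
        have h2 : (j : ℝ) < (Nn : ℝ) + 1 := lt_of_mul_lt_mul_right h1 hτ'.le
        have : (j : ℕ) < Nn + 1 := by exact_mod_cast h2
        omega
      have hiN : i ≤ Nn := hij.trans hjN
      have h1i : 1 ≤ i := by omega
      have hdisc : discInterp p τ' Nn t' = p j := by
        simp [discInterp, ← hjdef, min_eq_right hjN]
      have hmem : ∀ s : ℝ, 0 ≤ s → s ≤ T → s ∈ Set.Icc (0:ℝ) T := fun s h1 h2 => ⟨h1, h2⟩
      -- minimality at step i
      have hmin := (hsol n).2
      have hE1 : E ((i : ℝ) * τ') (p i) ≤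
          E ((i : ℝ) * τ') (z - xe t + p ⌊t / τ'⌋₊) + Ψ (z - xe t) := by
        have hsub : z - xe t + p ⌊t / τ'⌋₊ - p (i - 1) = z - xe t := by
          rw [show i - 1 = ⌊t / τ'⌋₊ from rfl]
          abel
        have hnorm : ‖z - xe t + p ⌊t / τ'⌋₊ - p (i - 1)‖ ≤ ε := by rw [hsub]; exact hz
        have h := (hmin i h1i hiN).2 (z - xe t + p ⌊t / τ'⌋₊) hnorm
        rw [hsub] at h
        have := hΨnn (p i - p (i - 1))
        linarith
      -- chain from i to j
      have hE2 : E ((j : ℝ) * τ') (p j) ≤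
          Real.exp (lam * (((j - i : ℕ) : ℝ) * τ')) * E ((i : ℝ) * τ') (p i) := by
        have h := chain_aux T E Et hEt lam hEbound Ψ hΨnn hΨ0 ε τ' hε hτ' Nn p hNτ
          (fun m h1 h2 x hx => (hmin m h1 h2).2 x hx) i (j - i) h1i (by omega)
        rwa [show i + (j - i) = j by omega] at h
      -- gronwall from jτ' to t'
      have hjτ0 : (0:ℝ) ≤ (j : ℝ) * τ' := mul_nonneg (Nat.cast_nonneg j) hτ'.le
      have hE3 : E t' (p j) ≤ Real.exp (lam * (t' - (j : ℝ) * τ')) * E ((j : ℝ) * τ') (p j) :=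
        (gronwall_aux T E Et hEt lam hEbound (p j) (hmem _ hjτ0 (hjτ.trans ht'.2.le))
          ht'Icc hjτ).1
      -- gronwall from t to iτ'
      have hiτT : (i : ℝ) * τ' ≤ T := by linarith [hiτ2, hn, ht'.2]
      have hE4 : E ((i : ℝ) * τ') (z - xe t + p ⌊t / τ'⌋₊) ≤
          Real.exp (lam * ((i : ℝ) * τ' - t)) * E t (z - xe t + p ⌊t / τ'⌋₊) :=
        (gronwall_aux T E Et hEt lam hEbound _ htIcc (hmem _ (mul_nonneg (Nat.cast_nonneg i) hτ'.le) hiτT)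
          hiτ.le).1
      -- combine
      have hcast : (((j - i : ℕ) : ℝ)) = (j : ℝ) - (i : ℝ) := by
        push_cast [Nat.cast_sub hij]; ring
      have hznn : 0 ≤ E t (z - xe t + p ⌊t / τ'⌋₊) := hEnn t htIcc _
      have hstep : E t' (p j) ≤
          Real.exp (lam * (t' - (i : ℝ) * τ')) *
            (E ((i : ℝ) * τ') (z - xe t + p ⌊t / τ'⌋₊) + Ψ (z - xe t)) := by
        calc E t' (p j)
            ≤ Real.exp (lam * (t' - (j : ℝ) * τ')) * E ((j : ℝ) * τ') (p j) := hE3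
          _ ≤ Real.exp (lam * (t' - (j : ℝ) * τ')) *
              (Real.exp (lam * (((j - i : ℕ) : ℝ) * τ')) * E ((i : ℝ) * τ') (p i)) :=
              mul_le_mul_of_nonneg_left hE2 (Real.exp_pos _).le
          _ = Real.exp (lam * (t' - (i : ℝ) * τ')) * E ((i : ℝ) * τ') (p i) := by
              rw [← mul_assoc, ← Real.exp_add]
              congr 2
              rw [hcast]; ring
          _ ≤ Real.exp (lam * (t' - (i : ℝ) * τ')) *
              (E ((i : ℝ) * τ') (z - xe t + p ⌊t / τ'⌋₊) + Ψ (z - xe t)) :=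
              mul_le_mul_of_nonneg_left hE1 (Real.exp_pos _).le
      rw [hdisc]
      refine hstep.trans ?_
      have hexp1 : Real.exp (lam * (t' - (i : ℝ) * τ')) ≤ Real.exp (lam * (t' - t)) := by
        apply Real.exp_le_exp.mpr
        nlinarith
      have hexp2 : Real.exp (lam * ((i : ℝ) * τ' - t)) ≤ Real.exp (lam * τ') := by
        apply Real.exp_le_exp.mpr
        nlinarith
      have hinner : E ((i : ℝ) * τ') (z - xe t + p ⌊t / τ'⌋₊) + Ψ (z - xe t) ≤
          Real.exp (lam * τ') * E t (z - xe t + p ⌊t / τ'⌋₊) + Ψ (z - xe t) := by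
        have := hE4.trans (mul_le_mul_of_nonneg_right hexp2 hznn)
        linarith
      have hinn0 : 0 ≤ E ((i : ℝ) * τ') (z - xe t + p ⌊t / τ'⌋₊) + Ψ (z - xe t) :=
        add_nonneg (hEnn _ (hmem _ (mul_nonneg (Nat.cast_nonneg i) hτ'.le) hiτT) _) hΨw
      exact mul_le_mul hexp1 hinner hinn0 (Real.exp_pos _).le
    -- take limits in n
    have tendL : Filter.Tendsto (fun n => E t' (discInterp (pts n) (τ n) (N n) t'))
        Filter.atTop (nhds (E t' (xe t'))) :=
      ((hDE t' ht'Icc (xe t')).continuousAt.tendsto).comp (hconv t' ht'Icc)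
    have tendExp : Filter.Tendsto (fun n => Real.exp (lam * τ n)) Filter.atTop (nhds 1) := by
      have h1 : Filter.Tendsto (fun n => lam * τ n) Filter.atTop (nhds 0) := by
        have := hτ0.const_mul lam
        simpa using this
      have := (Real.continuous_exp.tendsto 0).comp h1
      simpa [Function.comp_def] using this
    have tendEz : Filter.Tendsto (fun n => E t (z - xe t + pts n ⌊t / τ n⌋₊))
        Filter.atTop (nhds (E t z)) :=
      ((hDE t htIcc z).continuousAt.tendsto).comp hzn
    have tendR : Filter.Tendsto (fun n => Real.exp (lam * (t' - t)) *
        (Real.exp (lam * τ n) * E t (z - xe t + pts n ⌊t / τ n⌋₊) + Ψ (z - xe t)))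
        Filter.atTop (nhds (Real.exp (lam * (t' - t)) * (1 * E t z + Ψ (z - xe t)))) :=
      (((tendExp.mul tendEz).add_const (Ψ (z - xe t))).const_mul _)
    have := le_of_tendsto_of_tendsto tendL tendR hmain
    rwa [one_mul] at this
  -- second claim : pull back to time t
  have key2 : ∀ t' ∈ Set.Ioo t T,
      E t (xe t') ≤ Real.exp (2 * lam * (t' - t)) * (E t z + Ψ (z - xe t)) := by
    intro t' ht'
    have ht'Icc : t' ∈ Set.Icc (0:ℝ) T := ⟨ht.1.trans ht'.1.le, ht'.2.le⟩
    have hB : E t (xe t') ≤ Real.exp (lam * (t' - t)) * E t' (xe t') :=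
      (gronwall_aux T E Et hEt lam hEbound (xe t') htIcc ht'Icc ht'.1.le).2
    calc E t (xe t')
        ≤ Real.exp (lam * (t' - t)) * E t' (xe t') := hB
      _ ≤ Real.exp (lam * (t' - t)) *
          (Real.exp (lam * (t' - t)) * (E t z + Ψ (z - xe t))) :=
          mul_le_mul_of_nonneg_left (key t' ht') (Real.exp_pos _).le
      _ = Real.exp (2 * lam * (t' - t)) * (E t z + Ψ (z - xe t)) := by
          rw [← mul_assoc, ← Real.exp_add]
          congr 2
          ring
  -- take limit t' → t+
  have hF1 : Filter.Tendsto (fun t' => E t (xe t')) (nhdsWithin t (Set.Ioi t))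
      (nhds (E t (xe t))) :=
    ((hDE t htIcc (xe t)).continuousAt.tendsto).comp hrc
  have hF2 : Filter.Tendsto (fun t' => Real.exp (2 * lam * (t' - t)) * (E t z + Ψ (z - xe t)))
      (nhdsWithin t (Set.Ioi t)) (nhds (1 * (E t z + Ψ (z - xe t)))) := by
    have hc : Continuous (fun t' : ℝ => Real.exp (2 * lam * (t' - t)) * (E t z + Ψ (z - xe t))) := by
      continuity
    have h0 : Filter.Tendsto (fun t' => Real.exp (2 * lam * (t' - t)) * (E t z + Ψ (z - xe t)))
        (nhdsWithin t (Set.Ioi t))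
        (nhds (Real.exp (2 * lam * (t - t)) * (E t z + Ψ (z - xe t)))) :=
      (hc.tendsto t).mono_left nhdsWithin_le_nhds
    simpa using h0
  have hEv : ∀ᶠ t' in nhdsWithin t (Set.Ioi t),
      E t (xe t') ≤ Real.exp (2 * lam * (t' - t)) * (E t z + Ψ (z - xe t)) := by
    filter_upwards [Ioo_mem_nhdsGT_of_mem (Set.mem_Ico.mpr ⟨le_refl t, ht.2⟩)] with t' ht'
    exact key2 t' ht'
  have := le_of_tendsto_of_tendsto hF1 hF2 hEv
  rwa [one_mul] at this
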